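/- For real numbers t < b, the integral (1/(2π)) ∫_t^b (x · 2x)/√((b−x)(x−t)) dx equals (3b² + 2bt + 3t²)/8. -/

import Mathlib

open Real

/-- Coulomb fluid integral for the Gaussian weight (`v₀'(x) = 2x`):
`(1/(2π)) ∫_t^b x·2x/√((b-x)(x-t)) dx = (3b² + 2bt + 3t²)/8`. -/
theorem coulomb_integral_gaussian (t b : ℝ) (htb : t < b) :
    (1 / (2 * π)) * ∫ x in t..b, (x * (2 * x)) / Real.sqrt ((b - x) * (x - t))
      = (3 * b ^ 2 + 2 * b * t + 3 * t ^ 2) / 8 := by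
  set m : ℝ := (t + b) / 2 with hm
  set r : ℝ := (b - t) / 2 with hr
  have hr0 : 0 < r := by simp [hr]; linarith
  set g : ℝ → ℝ := fun θ => m + r * Real.sin θ with hg
  have himg : g '' Set.Ioo (-(π/2)) (π/2) = Set.Ioo t b := by
    ext x
    constructor
    · rintro ⟨θ, ⟨h1, h2⟩, rfl⟩
      have hs1 : -1 < Real.sin θ := by
        have := Real.sin_lt_sin_of_lt_of_le_pi_div_two (by linarith [Real.pi_pos] : -(π/2) ≤ -(π/2)) (le_of_lt h2) h1
        simpa using this
      have hs2 : Real.sin θ < 1 := by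
        have := Real.sin_lt_sin_of_lt_of_le_pi_div_two (le_of_lt h1) le_rfl h2
        simpa using this
      constructor
      · simp only [hg]; nlinarith
      · simp only [hg]; nlinarith
    · intro ⟨h1, h2⟩
      refine ⟨Real.arcsin ((x - m) / r), ⟨?_, ?_⟩, ?_⟩
      · rw [Real.neg_pi_div_two_lt_arcsin, lt_div_iff₀ hr0]; nlinarith
      · rw [Real.arcsin_lt_pi_div_two, div_lt_one hr0]; nlinarith
      · have h1' : -1 ≤ (x - m) / r := by rw [le_div_iff₀ hr0]; nlinarith
        have h2' : (x - m) / r ≤ 1 := by rw [div_le_one hr0]; nlinarith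
        simp only [hg]
        rw [Real.sin_arcsin h1' h2']
        field_simp
        ring
  have hderiv : ∀ θ ∈ Set.Ioo (-(π/2)) (π/2),
      HasDerivWithinAt g (r * Real.cos θ) (Set.Ioo (-(π/2)) (π/2)) θ := by
    intro θ _
    exact (((Real.hasDerivAt_sin θ).const_mul r).const_add m).hasDerivWithinAt
  have hinj : Set.InjOn g (Set.Ioo (-(π/2)) (π/2)) := by
    have : StrictMonoOn g (Set.Ioo (-(π/2)) (π/2)) := by
      intro a ha c hc hac
      have := Real.sin_lt_sin_of_lt_of_le_pi_div_two (le_of_lt ha.1) (le_of_lt hc.2) hac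
      simp only [hg]
      nlinarith
    exact this.injOn
  have key := MeasureTheory.integral_image_eq_integral_abs_deriv_smul measurableSet_Ioo hderiv
    hinj (fun x => (x * (2 * x)) / Real.sqrt ((b - x) * (x - t)))
  rw [himg] at key
  have hmain : (∫ x in t..b, (x * (2 * x)) / Real.sqrt ((b - x) * (x - t)))
      = ∫ θ in (-(π/2))..(π/2), 2 * (m + r * Real.sin θ) ^ 2 := by
    rw [intervalIntegral.integral_of_le (le_of_lt htb),
      MeasureTheory.integral_Ioc_eq_integral_Ioo, key,
      intervalIntegral.integral_of_le (by linarith [Real.pi_pos] : -(π/2) ≤ π/2),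
      MeasureTheory.integral_Ioc_eq_integral_Ioo]
    apply MeasureTheory.setIntegral_congr_fun measurableSet_Ioo
    intro θ ⟨h1, h2⟩
    have hcos : 0 < Real.cos θ := Real.cos_pos_of_mem_Ioo ⟨h1, h2⟩
    have hsq : (b - g θ) * (g θ - t) = (r * Real.cos θ) ^ 2 := by
      have h := Real.sin_sq_add_cos_sq θ
      simp only [hg, hm, hr]
      linear_combination (-(((b - t) / 2) ^ 2)) * h
    simp only [smul_eq_mul]
    rw [hsq, Real.sqrt_sq (by positivity), abs_of_pos (by positivity)]
    field_simp [hg]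
    ring
  rw [hmain]
  have hexp : ∀ θ : ℝ, 2 * (m + r * Real.sin θ) ^ 2
      = 2 * m ^ 2 + (4 * m * r) * Real.sin θ + (2 * r ^ 2) * Real.sin θ ^ 2 := by
    intro θ; ring
  simp_rw [hexp]
  rw [intervalIntegral.integral_add, intervalIntegral.integral_add]
  · rw [intervalIntegral.integral_const, intervalIntegral.integral_const_mul,
      intervalIntegral.integral_const_mul, integral_sin, integral_sin_sq]
    simp
    field_simp
    ring
  · exact intervalIntegrable_const
  · exact (intervalIntegral.intervalIntegrable_sin.const_mul _)
  · exact ((intervalIntegrable_const.add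
      (intervalIntegral.intervalIntegrable_sin.const_mul _)))
  · exact (continuous_const.mul (Real.continuous_sin.pow 2)).intervalIntegrable _ _
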